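/- Let w[S] = ((n-|S|)(1-θ) - ρ) θ^{|S|} and u[S] = (n - |S| - ρ) θ^{|S|} (1-θ)^{n-|S|} for S ⊆ [n]. Then for every S ⊆ [n], Σ_{T ⊇ S} (-1)^{|T\S|} w[T] = u[S]. -/

import Mathlib

open Finset

lemma binom1 (m : ℕ) (x : ℝ) :
    ∑ k ∈ range (m + 1), (m.choose k : ℝ) * x ^ k = (x + 1) ^ m := by
  rw [add_pow]
  refine Finset.sum_congr rfl fun k hk => ?_
  simp [mul_comm]

lemma binom2 (m : ℕ) (x : ℝ) :
    ∑ k ∈ range (m + 1), (k : ℝ) * (m.choose k : ℝ) * x ^ k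
      = m * x * (x + 1) ^ (m - 1) := by
  cases m with
  | zero => simp
  | succ mm =>
    rw [Finset.sum_range_succ']
    simp only [Nat.cast_zero, zero_mul, add_zero, Nat.add_sub_cancel]
    have : ∀ k ∈ range (mm + 1),
        ((k : ℝ) + 1) * ((mm + 1).choose (k + 1) : ℝ) * x ^ (k + 1)
          = ((mm : ℝ) + 1) * x * ((mm.choose k : ℝ) * x ^ k) := by
      intro k hk
      have h := Nat.add_one_mul_choose_eq mm k
      have h' : ((mm : ℝ) + 1) * (mm.choose k : ℝ)
          = ((mm + 1).choose (k + 1) : ℝ) * ((k : ℝ) + 1) := by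
        exact_mod_cast congrArg (Nat.cast : ℕ → ℝ) h
      calc ((k : ℝ) + 1) * ((mm + 1).choose (k + 1) : ℝ) * x ^ (k + 1)
          = ((mm + 1).choose (k + 1) : ℝ) * ((k : ℝ) + 1) * (x ^ k * x) := by ring
        _ = ((mm : ℝ) + 1) * (mm.choose k : ℝ) * (x ^ k * x) := by rw [← h']
        _ = ((mm : ℝ) + 1) * x * ((mm.choose k : ℝ) * x ^ k) := by ring
    push_cast
    rw [Finset.sum_congr rfl this, ← Finset.mul_sum, binom1]

lemma key_sum (m : ℕ) (θ ρ : ℝ) :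
    ∑ j ∈ range (m + 1), (m.choose j : ℝ) * (-θ) ^ j * (((m : ℝ) - j) * (1 - θ) - ρ)
      = ((m : ℝ) - ρ) * (1 - θ) ^ m := by
  have h1 := binom1 m (-θ)
  have h2 := binom2 m (-θ)
  have hx : (-θ) + 1 = 1 - θ := by ring
  rw [hx] at h1 h2
  have hsplit : ∑ j ∈ range (m + 1), (m.choose j : ℝ) * (-θ) ^ j * (((m : ℝ) - j) * (1 - θ) - ρ)
      = ((m : ℝ) * (1 - θ) - ρ) * (∑ j ∈ range (m + 1), (m.choose j : ℝ) * (-θ) ^ j)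
        - (1 - θ) * (∑ j ∈ range (m + 1), (j : ℝ) * (m.choose j : ℝ) * (-θ) ^ j) := by
    rw [Finset.mul_sum, Finset.mul_sum, ← Finset.sum_sub_distrib]
    exact Finset.sum_congr rfl fun j hj => by ring
  rw [hsplit, h1, h2]
  rcases Nat.eq_zero_or_pos m with hm | hm
  · subst hm; simp
  · have hp : (1 - θ) * (1 - θ) ^ (m - 1) = (1 - θ) ^ m := by
      rw [← pow_succ']
      congr 1
      omega
    linear_combination ((m : ℝ) * θ) * hp

/-- The Möbius transform of `w[S] = ((n-|S|)(1-θ) - ρ) θ^{|S|}` is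
`u[S] = (n - |S| - ρ) θ^{|S|} (1-θ)^{n-|S|}`. -/
theorem mobius_transform_w (n : ℕ) (hn : 0 < n) (θ ρ : ℝ) (hθ0 : 0 < θ) (hθ1 : θ < 1)
    (hρ : 0 < ρ)
    (w u : Finset (Fin n) → ℝ)
    (hw : ∀ S : Finset (Fin n), w S = ((n - S.card) * (1 - θ) - ρ) * θ ^ S.card)
    (hu : ∀ S : Finset (Fin n), u S = (n - S.card - ρ) * θ ^ S.card * (1 - θ) ^ (n - S.card)) :
    ∀ S : Finset (Fin n),
      ∑ T ∈ Finset.univ.filter (fun T : Finset (Fin n) => S ⊆ T),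
        (-1 : ℝ) ^ (T \ S).card * w T = u S := by
  intro S
  classical
  set s := S.card with hs
  have hsn : s ≤ n := by
    simpa using Finset.card_le_univ S
  set m := n - s with hmdef
  have hcompl : Sᶜ.card = m := by
    simp [Finset.card_compl, hs]
    rfl
  -- Step 1: reindex by A = T \ S
  have hre : ∑ T ∈ Finset.univ.filter (fun T : Finset (Fin n) => S ⊆ T),
        (-1 : ℝ) ^ (T \ S).card * w T
      = ∑ A ∈ Sᶜ.powerset, (-1 : ℝ) ^ A.card * w (S ∪ A) := by
    refine Finset.sum_nbij' (fun T => T \ S) (fun A => S ∪ A) ?_ ?_ ?_ ?_ ?_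
    · intro T hT
      rw [Finset.mem_filter] at hT
      rw [Finset.mem_powerset]
      intro x hx
      rw [Finset.mem_sdiff] at hx
      simpa using hx.2
    · intro A hA
      rw [Finset.mem_powerset] at hA
      simp [Finset.mem_filter]
    · intro T hT
      rw [Finset.mem_filter] at hT
      exact Finset.union_sdiff_of_subset hT.2
    · intro A hA
      rw [Finset.mem_powerset] at hA
      have hdisj : Disjoint S A := by
        rw [Finset.disjoint_left]
        intro x hxS hxA
        have := hA hxA
        simp at this
        exact this hxS
      show (S ∪ A) \ S = A
      rw [Finset.union_sdiff_cancel_left hdisj]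
    · intro T hT
      rw [Finset.mem_filter] at hT
      rw [Finset.union_sdiff_of_subset hT.2]
  rw [hre]
  -- Step 2: group by cardinality
  rw [Finset.sum_powerset, hcompl]
  have hinner : ∀ j ∈ range (m + 1),
      ∑ A ∈ Finset.powersetCard j Sᶜ, (-1 : ℝ) ^ A.card * w (S ∪ A)
        = (m.choose j : ℝ) *
            ((-1 : ℝ) ^ j * (((n : ℝ) - (s + j)) * (1 - θ) - ρ) * θ ^ (s + j)) := by
    intro j hj
    have hterm : ∀ A ∈ Finset.powersetCard j Sᶜ,
        (-1 : ℝ) ^ A.card * w (S ∪ A)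
          = (-1 : ℝ) ^ j * (((n : ℝ) - (s + j)) * (1 - θ) - ρ) * θ ^ (s + j) := by
      intro A hA
      rw [Finset.mem_powersetCard] at hA
      have hdisj : Disjoint S A := by
        rw [Finset.disjoint_left]
        intro x hxS hxA
        have := hA.1 hxA
        simp at this
        exact this hxS
      have hcard : (S ∪ A).card = s + j := by
        rw [Finset.card_union_of_disjoint hdisj, hA.2]
      rw [hw, hcard, hA.2]
      push_cast
      ring
    rw [Finset.sum_congr rfl hterm, Finset.sum_const, Finset.card_powersetCard, hcompl,
      nsmul_eq_mul]
  rw [Finset.sum_congr rfl hinner]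
  -- Step 3: apply the key binomial identity
  have hmcast : (m : ℝ) = (n : ℝ) - s := by
    rw [hmdef]
    push_cast [Nat.cast_sub hsn]
    ring
  have hshape : ∀ j ∈ range (m + 1),
      (m.choose j : ℝ) * ((-1 : ℝ) ^ j * (((n : ℝ) - (s + j)) * (1 - θ) - ρ) * θ ^ (s + j))
        = θ ^ s * ((m.choose j : ℝ) * (-θ) ^ j * (((m : ℝ) - j) * (1 - θ) - ρ)) := by
    intro j hj
    rw [hmcast, pow_add]
    ring
  rw [Finset.sum_congr rfl hshape, ← Finset.mul_sum, key_sum, hu S, ← hs, hmcast, ← hmdef]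
  ring
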